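/- There exists a constant C > 1 depending only on Λ ≥ 1 such that for all u, w ∈ (0, Λ²] with u ≤ w, one has u/w − sinh(u)/sinh(w) ≤ C·(1 − u/w). -/

import Mathlib

open Real

lemma sinh_sub_sinh_le_aux {u w : ℝ} (hu : 0 ≤ u) (huw : u ≤ w) :
    Real.sinh w - Real.sinh u ≤ (w - u) * Real.cosh w := by
  have hA : AntitoneOn (fun x : ℝ => Real.sinh x - x * Real.cosh w) (Set.Icc 0 w) := by
    apply antitoneOn_of_deriv_nonpos (convex_Icc 0 w)
    · fun_prop
    · fun_prop
    · intro x hx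
      rw [interior_Icc] at hx
      have : deriv (fun x : ℝ => Real.sinh x - x * Real.cosh w) x
          = Real.cosh x - Real.cosh w := by
        simp [Real.deriv_sinh]
      rw [this]
      have : Real.cosh x ≤ Real.cosh w := by
        rw [Real.cosh_le_cosh]
        rw [abs_of_pos hx.1, abs_of_pos (lt_of_lt_of_le hx.1 hx.2.le)]
        exact hx.2.le
      linarith
  have := hA (Set.mem_Icc.2 ⟨hu, huw⟩) (Set.mem_Icc.2 ⟨hu.trans huw, le_refl w⟩) huw
  simp only at this
  nlinarith

/-- There is a constant `C > 1` depending only on `Λ ≥ 1` such that for all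
`u, w ∈ (0, Λ²]` with `u ≤ w`, one has `u/w − sinh u / sinh w ≤ C (1 − u/w)`. -/
theorem stmt_4 (Λ : ℝ) (hΛ : 1 ≤ Λ) :
    ∃ C : ℝ, 1 < C ∧
      ∀ u w : ℝ, u ∈ Set.Ioc 0 (Λ ^ 2) → w ∈ Set.Ioc 0 (Λ ^ 2) → u ≤ w →
        u / w - Real.sinh u / Real.sinh w ≤ C * (1 - u / w) := by
  refine ⟨Real.cosh (Λ ^ 2) + 1, by nlinarith [Real.one_le_cosh (Λ ^ 2)], ?_⟩
  intro u w hu hw huw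
  obtain ⟨hu0, huΛ⟩ := hu
  obtain ⟨hw0, hwΛ⟩ := hw
  have hsw : 0 < Real.sinh w := Real.sinh_pos_iff.2 hw0
  have hsu : 0 < Real.sinh u := Real.sinh_pos_iff.2 hu0
  have hws : w ≤ Real.sinh w := Real.self_le_sinh_iff.2 hw0.le
  have hcw : Real.cosh w ≤ Real.cosh (Λ ^ 2) := by
    rw [Real.cosh_le_cosh, abs_of_pos hw0, abs_of_nonneg (by positivity)]
    exact hwΛ
  have hcw1 : 1 ≤ Real.cosh w := Real.one_le_cosh w
  have key : Real.sinh w - Real.sinh u ≤ (w - u) * Real.cosh w :=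
    sinh_sub_sinh_le_aux hu0.le huw
  rw [div_sub_div _ _ hw0.ne' hsw.ne', sub_div' hw0.ne', ← mul_div_assoc,
    div_le_div_iff₀ (by positivity) hw0]
  have h1 : u * (Real.sinh w - Real.sinh u) ≤ u * ((w - u) * Real.cosh w) :=
    mul_le_mul_of_nonneg_left key hu0.le
  have h2 : 0 ≤ (w - u) * Real.sinh u := mul_nonneg (by linarith) hsu.le
  have h3 : (w - u) * (u * Real.cosh w) ≤ (w - u) * (Real.sinh w * Real.cosh (Λ ^ 2)) := by
    apply mul_le_mul_of_nonneg_left _ (by linarith : (0:ℝ) ≤ w - u)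
    calc u * Real.cosh w ≤ Real.sinh w * Real.cosh w :=
          mul_le_mul_of_nonneg_right (huw.trans hws) (by linarith)
      _ ≤ Real.sinh w * Real.cosh (Λ ^ 2) := mul_le_mul_of_nonneg_left hcw hsw.le
  nlinarith [mul_pos hw0 hsw, mul_nonneg (mul_nonneg (by linarith : (0:ℝ) ≤ w - u) hsw.le) hw0.le]
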